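/- Let I be an ideal of k[x₁,…,x_n] that is homogeneous with respect to some weight vector α ∈ (ℤ_{>0})^n. Then for every u ∈ ℝ^n with all u_i < 0 and every f ∈ k[[x]]·I nonzero, in_u(f) belongs to in_u(I), and consequently in_u(k[[x]]·I) = in_u(I); i.e., for α-homogeneous ideals the local and global initial ideals coincide on the interior of the negative orthant. -/

import Mathlib

open scoped Classical

noncomputable section

/-- The `u`-weight of an exponent vector. -/
def wtR {n : ℕ} (u : Fin n → ℝ) (α : Fin n →₀ ℕ) : ℝ := ∑ i, u i * (α i : ℝ)

/-- The `u`-order of a polynomial. -/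
def pord {n : ℕ} {K : Type*} [CommSemiring K] (u : Fin n → ℝ)
    (f : MvPolynomial (Fin n) K) : ℝ :=
  if h : f = 0 then 0
  else f.support.sup' (MvPolynomial.support_nonempty.mpr h) (wtR u)

/-- The initial form `in_u(f)` of a polynomial. -/
def initForm {n : ℕ} {K : Type*} [CommSemiring K] (u : Fin n → ℝ)
    (f : MvPolynomial (Fin n) K) : MvPolynomial (Fin n) K :=
  ∑ β ∈ f.support.filter (fun β => wtR u β = pord u f),
    MvPolynomial.monomial β (MvPolynomial.coeff β f)

/-- The initial ideal `in_u(I)` of a polynomial ideal. -/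
def initIdeal {n : ℕ} {K : Type*} [CommSemiring K] (u : Fin n → ℝ)
    (I : Ideal (MvPolynomial (Fin n) K)) : Ideal (MvPolynomial (Fin n) K) :=
  Ideal.span {g | ∃ f ∈ I, f ≠ 0 ∧ g = initForm u f}

/-- `g` is the initial form `in_u(P)` of the nonzero power series `P`. -/
def IsInit {n : ℕ} (K : Type*) [Field K] (u : Fin n → ℝ)
    (P : MvPowerSeries (Fin n) K) (g : MvPolynomial (Fin n) K) : Prop :=
  P ≠ 0 ∧ ∃ c : ℝ,
    (∃ α, MvPowerSeries.coeff α P ≠ 0 ∧ wtR u α = c) ∧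
    (∀ α, MvPowerSeries.coeff α P ≠ 0 → wtR u α ≤ c) ∧
    (∀ α, MvPolynomial.coeff α g =
      if wtR u α = c then MvPowerSeries.coeff α P else 0)

namespace InitAux

variable {n : ℕ} {K : Type*} [Field K]

/-- Truncation of a power series to exponents `≤ b` (pointwise). -/
def truncLE (b : Fin n →₀ ℕ) (Q : MvPowerSeries (Fin n) K) : MvPolynomial (Fin n) K :=
  ∑ β ∈ Finset.Iic b, MvPolynomial.monomial β (MvPowerSeries.coeff β Q)

lemma coeff_truncLE (b : Fin n →₀ ℕ) (Q : MvPowerSeries (Fin n) K) (γ : Fin n →₀ ℕ) :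
    MvPolynomial.coeff γ (truncLE b Q) =
      if γ ≤ b then MvPowerSeries.coeff γ Q else 0 := by
  unfold truncLE
  rw [MvPolynomial.coeff_sum]
  simp only [MvPolynomial.coeff_monomial]
  rw [Finset.sum_ite_eq' (Finset.Iic b) γ]
  simp [Finset.mem_Iic]

lemma coeff_mul_truncLE {b γ : Fin n →₀ ℕ} (hγ : γ ≤ b)
    (Q F : MvPowerSeries (Fin n) K) :
    MvPowerSeries.coeff γ (Q * F) =
      MvPowerSeries.coeff γ ((truncLE b Q : MvPowerSeries (Fin n) K) * F) := by
  rw [MvPowerSeries.coeff_mul, MvPowerSeries.coeff_mul]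
  refine Finset.sum_congr rfl fun q hq => ?_
  rw [Finset.HasAntidiagonal.mem_antidiagonal] at hq
  have h1 : q.1 ≤ b := le_trans (hq ▸ self_le_add_right q.1 q.2) hγ
  rw [MvPolynomial.coeff_coe, coeff_truncLE, if_pos h1]

lemma exists_poly_approx (I : Ideal (MvPolynomial (Fin n) K))
    {P : MvPowerSeries (Fin n) K}
    (hP : P ∈ Ideal.span
      ((fun f : MvPolynomial (Fin n) K => (f : MvPowerSeries (Fin n) K)) '' I))
    (b : Fin n →₀ ℕ) :
    ∃ p ∈ I, ∀ γ ≤ b, MvPowerSeries.coeff γ P = MvPolynomial.coeff γ p := by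
  induction hP using Submodule.span_induction with
  | mem x hx =>
      obtain ⟨f, hf, rfl⟩ := hx
      exact ⟨f, hf, fun γ _ => MvPolynomial.coeff_coe f γ⟩
  | zero => exact ⟨0, I.zero_mem, by simp⟩
  | add x y hx hy ihx ihy =>
      obtain ⟨p, hp, hpc⟩ := ihx
      obtain ⟨q, hq, hqc⟩ := ihy
      refine ⟨p + q, I.add_mem hp hq, fun γ hγ => ?_⟩
      rw [map_add, MvPolynomial.coeff_add, hpc γ hγ, hqc γ hγ]
  | smul a x hx ih =>
      obtain ⟨p, hp, hpc⟩ := ih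
      refine ⟨truncLE b a * p, I.mul_mem_left _ hp, fun γ hγ => ?_⟩
      have h1 : MvPowerSeries.coeff γ (a * x) =
          MvPowerSeries.coeff γ (a * (p : MvPowerSeries (Fin n) K)) := by
        rw [MvPowerSeries.coeff_mul, MvPowerSeries.coeff_mul]
        refine Finset.sum_congr rfl fun q hq => ?_
        rw [Finset.HasAntidiagonal.mem_antidiagonal] at hq
        have h2 : q.2 ≤ b := le_trans (hq ▸ le_add_self) hγ
        rw [MvPolynomial.coeff_coe, ← hpc q.2 h2]
      rw [smul_eq_mul, h1, coeff_mul_truncLE hγ,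
        ← MvPolynomial.coe_mul, MvPolynomial.coeff_coe]

lemma exists_degree_bound (u : Fin n → ℝ) (hu : ∀ i, u i < 0) (c : ℝ) :
    ∃ D : ℕ, ∀ β : Fin n →₀ ℕ, c ≤ wtR u β → ∀ i, β i ≤ D := by
  set s : Finset ℝ := insert 1 (Finset.univ.image fun i => -u i) with hs
  have hne : s.Nonempty := ⟨1, Finset.mem_insert_self _ _⟩
  set ε := s.min' hne with hε
  have hε0 : 0 < ε := by
    rw [hε, Finset.lt_min'_iff]
    intro y hy
    rw [hs, Finset.mem_insert] at hy
    rcases hy with rfl | hy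
    · norm_num
    · obtain ⟨i, _, rfl⟩ := Finset.mem_image.mp hy
      linarith [hu i]
  have hεu : ∀ i, u i ≤ -ε := fun i => by
    have := Finset.min'_le s (-u i)
      (by rw [hs]; exact Finset.mem_insert_of_mem (Finset.mem_image_of_mem _ (Finset.mem_univ i)))
    linarith
  refine ⟨⌈(-c) / ε⌉₊, fun β hβ i => ?_⟩
  have hwt : wtR u β ≤ -ε * (β i : ℝ) := by
    have h1 : wtR u β ≤ ∑ j, (-ε) * (β j : ℝ) := by
      refine Finset.sum_le_sum fun j _ => ?_
      exact mul_le_mul_of_nonneg_right (hεu j) (Nat.cast_nonneg _)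
    have h2 : (β i : ℝ) ≤ ∑ j, (β j : ℝ) :=
      Finset.single_le_sum (f := fun j => (β j : ℝ)) (fun j _ => Nat.cast_nonneg _)
        (Finset.mem_univ i)
    calc wtR u β ≤ ∑ j, (-ε) * (β j : ℝ) := h1
      _ = -ε * ∑ j, (β j : ℝ) := by rw [Finset.mul_sum]
      _ ≤ -ε * (β i : ℝ) := by nlinarith
  have h3 : (β i : ℝ) ≤ (-c) / ε := by
    rw [le_div_iff₀ hε0]
    nlinarith
  have h4 : (β i : ℝ) ≤ (⌈(-c) / ε⌉₊ : ℝ) := h3.trans (Nat.le_ceil _)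
  exact_mod_cast h4

lemma coeff_initForm (u : Fin n → ℝ) (f : MvPolynomial (Fin n) K) (β : Fin n →₀ ℕ) :
    MvPolynomial.coeff β (initForm u f) =
      if wtR u β = pord u f then MvPolynomial.coeff β f else 0 := by
  unfold initForm
  rw [MvPolynomial.coeff_sum]
  simp only [MvPolynomial.coeff_monomial]
  rw [Finset.sum_ite_eq' _ β]
  by_cases hw : wtR u β = pord u f
  · rw [if_pos hw]
    by_cases hsupp : β ∈ f.support
    · rw [if_pos (Finset.mem_filter.mpr ⟨hsupp, hw⟩)]
    · rw [if_neg (fun h => hsupp (Finset.mem_filter.mp h).1),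
        MvPolynomial.notMem_support_iff.mp hsupp]
  · have h1 : β ∉ f.support.filter (fun β => wtR u β = pord u f) :=
      fun h => hw (Finset.mem_filter.mp h).2
    rw [if_neg h1, if_neg hw]

lemma key (I : Ideal (MvPolynomial (Fin n) K)) (u : Fin n → ℝ) (hu : ∀ i, u i < 0)
    {P : MvPowerSeries (Fin n) K}
    (hP : P ∈ Ideal.span
      ((fun f : MvPolynomial (Fin n) K => (f : MvPowerSeries (Fin n) K)) '' I))
    (g : MvPolynomial (Fin n) K) (hg : IsInit K u P g) : g ∈ initIdeal u I := by
  obtain ⟨hP0, c, ⟨β₀, hβ₀, hβ₀c⟩, hle, hcoeff⟩ := hg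
  obtain ⟨D, hD⟩ := exists_degree_bound u hu c
  set b : Fin n →₀ ℕ := Finsupp.equivFunOnFinite.symm (fun _ => D) with hb_def
  have hb : ∀ γ : Fin n →₀ ℕ, c ≤ wtR u γ → γ ≤ b := by
    intro γ hγ i
    simpa [hb_def] using hD γ hγ i
  obtain ⟨p, hpI, hpc⟩ := exists_poly_approx I hP b
  have hβ₀b : β₀ ≤ b := hb β₀ hβ₀c.ge
  have hcoeffβ₀ : MvPolynomial.coeff β₀ p ≠ 0 := by
    rw [← hpc β₀ hβ₀b]; exact hβ₀
  have hp0 : p ≠ 0 := fun h => hcoeffβ₀ (by simp [h])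
  have hpord : pord u p = c := by
    rw [pord, dif_neg hp0]
    apply le_antisymm
    · apply Finset.sup'_le
      intro β hβ
      by_contra hlt
      push_neg at hlt
      have hβb : β ≤ b := hb β hlt.le
      have hPβ : MvPowerSeries.coeff β P ≠ 0 := by
        rw [hpc β hβb]; exact MvPolynomial.mem_support_iff.mp hβ
      exact absurd (hle β hPβ) (not_le.mpr hlt)
    · calc c = wtR u β₀ := hβ₀c.symm
        _ ≤ _ := Finset.le_sup' (wtR u) (MvPolynomial.mem_support_iff.mpr hcoeffβ₀)
  have hgp : g = initForm u p := by
    apply MvPolynomial.ext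
    intro β
    rw [hcoeff β, coeff_initForm, hpord]
    by_cases hw : wtR u β = c
    · rw [if_pos hw, if_pos hw, hpc β (hb β hw.ge)]
    · rw [if_neg hw, if_neg hw]
  rw [hgp]
  exact Ideal.subset_span ⟨p, hpI, hp0, rfl⟩

end InitAux

/-- Let `I ⊆ k[x]` be an ideal homogeneous for some positive weight vector `α`.  Then for any
`u` with all `u_i < 0`, the initial form of every nonzero `P ∈ k[[x]]·I` lies in `in_u(I)`,
and consequently `in_u(k[[x]]·I) = in_u(I)`. -/
theorem initial_ideal_homogeneous_case {n : ℕ} {K : Type*} [Field K]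
    (I : Ideal (MvPolynomial (Fin n) K)) (α : Fin n → ℕ) (hα : ∀ i, 0 < α i)
    (hhom : ∃ S : Set (MvPolynomial (Fin n) K), I = Ideal.span S ∧
      ∀ g ∈ S, ∃ d : ℕ, ∀ β ∈ g.support, ∑ i, α i * β i = d)
    (u : Fin n → ℝ) (hu : ∀ i, u i < 0) :
    (∀ P ∈ Ideal.span
        ((fun f : MvPolynomial (Fin n) K => (f : MvPowerSeries (Fin n) K)) '' I),
      ∀ g : MvPolynomial (Fin n) K, IsInit K u P g → g ∈ initIdeal u I) ∧
    Ideal.span {g : MvPolynomial (Fin n) K |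
        ∃ P ∈ Ideal.span
          ((fun f : MvPolynomial (Fin n) K => (f : MvPowerSeries (Fin n) K)) '' I),
          IsInit K u P g} = initIdeal u I := by
  constructor
  · intro P hP g hg
    exact InitAux.key I u hu hP g hg
  · apply le_antisymm
    · rw [Ideal.span_le]
      rintro g ⟨P, hP, hinit⟩
      exact InitAux.key I u hu hP g hinit
    · rw [initIdeal, Ideal.span_le]
      rintro g ⟨f, hfI, hf0, rfl⟩
      apply Ideal.subset_span
      refine ⟨(f : MvPowerSeries (Fin n) K),
        Ideal.subset_span ⟨f, hfI, rfl⟩, ?_, pord u f, ?_, ?_, ?_⟩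
      · intro h
        apply hf0
        apply MvPolynomial.ext
        intro β
        rw [← MvPolynomial.coeff_coe, h]
        simp
      · obtain ⟨β, hβmem, hβeq⟩ :=
          Finset.exists_mem_eq_sup' (MvPolynomial.support_nonempty.mpr hf0) (wtR u)
        refine ⟨β, ?_, ?_⟩
        · rw [MvPolynomial.coeff_coe]
          exact MvPolynomial.mem_support_iff.mp hβmem
        · rw [pord, dif_neg hf0, hβeq]
      · intro β hβ
        rw [MvPolynomial.coeff_coe] at hβ
        rw [pord, dif_neg hf0]
        exact Finset.le_sup' (wtR u) (MvPolynomial.mem_support_iff.mpr hβ)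
      · intro β
        rw [InitAux.coeff_initForm, MvPolynomial.coeff_coe]
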